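/- Let δ > 0, let f : {0,1}^n → {0,1}, and let μ be a bit-wise product distribution on {0,1}^n that is (α₀, β₀, α₁, β₁, a, b)-feasible for f. Then there exists a deterministic decision tree for f of depth at most a·b whose error probability under μ is at most 1/4 + α₁ + β₁ + 4b(β₁ + δ) + β₀/((1−α₀)δ) (assuming α₀ < 1). -/

import Mathlib

open scoped BigOperators
open scoped Classical

noncomputable section

/-! ## Probability distributions on finite types -/

/-- `p` is a probability distribution on the finite type `α`. -/
def IsDist {α : Type} [Fintype α] (p : α → ℝ) : Prop :=
  (∀ a, 0 ≤ p a) ∧ ∑ a, p a = 1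

/-- `μ` (in curried form) is a probability distribution on `X × Y`. -/
def IsDist2 {X Y : Type} [Fintype X] [Fintype Y] (μ : X → Y → ℝ) : Prop :=
  (∀ x y, 0 ≤ μ x y) ∧ ∑ x, ∑ y, μ x y = 1

/-! ## Deterministic communication protocols -/

/-- A deterministic two-party communication protocol: a finite binary tree where each
internal node is owned by Alice (`nodeA`) or Bob (`nodeB`) and is labeled by a function
of that player's input choosing one of the two children; leaves carry Boolean outputs. -/
inductive Protocol (X Y : Type) : Type
  | leaf : Bool → Protocol X Y
  | nodeA : (X → Bool) → Protocol X Y → Protocol X Y → Protocol X Y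
  | nodeB : (Y → Bool) → Protocol X Y → Protocol X Y → Protocol X Y

namespace Protocol

def eval {X Y : Type} : Protocol X Y → X → Y → Bool
  | leaf b, _, _ => b
  | nodeA g t0 t1, x, y => if g x then eval t1 x y else eval t0 x y
  | nodeB g t0 t1, x, y => if g y then eval t1 x y else eval t0 x y

/-- Depth (number of bits communicated in the worst case). -/
def depth {X Y : Type} : Protocol X Y → ℕ
  | leaf _ => 0
  | nodeA _ t0 t1 => max (depth t0) (depth t1) + 1
  | nodeB _ t0 t1 => max (depth t0) (depth t1) + 1

/-- Number of leaves. -/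
def leavesCount {X Y : Type} : Protocol X Y → ℕ
  | leaf _ => 1
  | nodeA _ t0 t1 => leavesCount t0 + leavesCount t1
  | nodeB _ t0 t1 => leavesCount t0 + leavesCount t1

/-- The sequence of bits communicated on input `(x, y)`. -/
def transcript {X Y : Type} : Protocol X Y → X → Y → List Bool
  | leaf _, _, _ => []
  | nodeA g t0 t1, x, y =>
      if g x then true :: transcript t1 x y else false :: transcript t0 x y
  | nodeB g t0 t1, x, y =>
      if g y then true :: transcript t1 x y else false :: transcript t0 x y

end Protocol

/-- Error of a deterministic protocol w.r.t. input distribution `μ`. -/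
def commErr {X Y : Type} [Fintype X] [Fintype Y]
    (μ : X → Y → ℝ) (f : X → Y → Bool) (P : Protocol X Y) : ℝ :=
  ∑ x, ∑ y, if P.eval x y ≠ f x y then μ x y else 0

/-- Distributional communication complexity `CC^μ_ε(f)`: the minimum depth of a
deterministic protocol erring with probability at most `ε` under `μ`. -/
def CCdist {X Y : Type} [Fintype X] [Fintype Y]
    (μ : X → Y → ℝ) (f : X → Y → Bool) (ε : ℝ) : ℕ :=
  sInf {d : ℕ | ∃ P : Protocol X Y, P.depth ≤ d ∧ commErr μ f P ≤ ε}

/-- The advantage `adv_μ(Π)` of a protocol w.r.t. a (not necessarily normalized) measure. -/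
def protAdv {X Y : Type} [Fintype X] [Fintype Y]
    (μ : X → Y → ℝ) (f : X → Y → Bool) (P : Protocol X Y) : ℝ :=
  ∑ x, ∑ y, if P.eval x y = f x y then μ x y else - μ x y

/-! ## Information complexity -/

/-- Probability of an event under a finite (possibly unnormalized) distribution. -/
def prOf {Ω : Type} [Fintype Ω] (p : Ω → ℝ) (q : Ω → Prop) : ℝ :=
  ∑ ω, if q ω then p ω else 0

/-- Conditional mutual information `I(A ; B | C)` (in bits) of random variables `A`, `B`, `C`
defined on a finite probability space `(Ω, p)`. -/
def condMI {Ω α β γ : Type} [Fintype Ω] (p : Ω → ℝ)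
    (A : Ω → α) (B : Ω → β) (C : Ω → γ) : ℝ :=
  ∑ ω, p ω * Real.logb 2 (
    (prOf p (fun ω' => A ω' = A ω ∧ B ω' = B ω ∧ C ω' = C ω) *
      prOf p (fun ω' => C ω' = C ω)) /
    (prOf p (fun ω' => A ω' = A ω ∧ C ω' = C ω) *
      prOf p (fun ω' => B ω' = B ω ∧ C ω' = C ω)))

/-- Internal information cost `IC^μ(Π) = I(X;T|Y) + I(Y;T|X)` of the public-coin protocol
given by a distribution `ρ` on `Fin m` together with deterministic protocols `P r`; the
transcript `T` consists of the public randomness together with the communicated bits. -/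
def infoCost {X Y : Type} [Fintype X] [Fintype Y] (μ : X → Y → ℝ)
    {m : ℕ} (ρ : Fin m → ℝ) (P : Fin m → Protocol X Y) : ℝ :=
  condMI (fun ω : X × Y × Fin m => μ ω.1 ω.2.1 * ρ ω.2.2)
      (fun ω => ω.1)
      (fun ω => (ω.2.2, (P ω.2.2).transcript ω.1 ω.2.1))
      (fun ω => ω.2.1)
  + condMI (fun ω : X × Y × Fin m => μ ω.1 ω.2.1 * ρ ω.2.2)
      (fun ω => ω.2.1)
      (fun ω => (ω.2.2, (P ω.2.2).transcript ω.1 ω.2.1))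
      (fun ω => ω.1)

/-- Error of a public-coin protocol under input distribution `μ` and coin distribution `ρ`. -/
def randErr {X Y : Type} [Fintype X] [Fintype Y] (μ : X → Y → ℝ) (f : X → Y → Bool)
    {m : ℕ} (ρ : Fin m → ℝ) (P : Fin m → Protocol X Y) : ℝ :=
  ∑ x, ∑ y, ∑ r, if (P r).eval x y ≠ f x y then μ x y * ρ r else 0

/-- `IC^μ_ε(f)`: infimum of the information cost over all public-coin protocols computing
`f` with error at most `ε` under `μ`. -/
def ICmu {X Y : Type} [Fintype X] [Fintype Y]
    (μ : X → Y → ℝ) (f : X → Y → Bool) (ε : ℝ) : ℝ :=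
  sInf { c : ℝ | ∃ (m : ℕ) (ρ : Fin m → ℝ) (P : Fin m → Protocol X Y),
    IsDist ρ ∧ randErr μ f ρ P ≤ ε ∧ c = infoCost μ ρ P }

/-- `IC_ε(f) = max_μ IC^μ_ε(f)`. -/
def IC {X Y : Type} [Fintype X] [Fintype Y] (f : X → Y → Bool) (ε : ℝ) : ℝ :=
  sSup { c : ℝ | ∃ μ : X → Y → ℝ, IsDist2 μ ∧ c = ICmu μ f ε }

/-! ## Rectangles, smooth rectangle bound and partition bound -/

/-- Total weight of rectangles containing `(x, y)`: a combinatorial rectangle is a pair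
`R = (S, T)` of finite sets, and `(x,y) ∈ R` iff `x ∈ S ∧ y ∈ T`. -/
def rcov {X Y : Type} [Fintype X] [Fintype Y]
    (w : Finset X × Finset Y → ℝ) (x : X) (y : Y) : ℝ :=
  ∑ R : Finset X × Finset Y, if x ∈ R.1 ∧ y ∈ R.2 then w R else 0

/-- `μ(R)` for a rectangle `R`. -/
def rMass {X Y : Type} [Fintype X] [Fintype Y]
    (μ : X → Y → ℝ) (R : Finset X × Finset Y) : ℝ :=
  ∑ x, ∑ y, if x ∈ R.1 ∧ y ∈ R.2 then μ x y else 0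

/-- `μ_z(R) = μ(R ∩ f⁻¹(z))` for a rectangle `R`. -/
def rMassZ {X Y : Type} [Fintype X] [Fintype Y]
    (μ : X → Y → ℝ) (f : X → Y → Bool) (z : Bool) (R : Finset X × Finset Y) : ℝ :=
  ∑ x, ∑ y, if (x ∈ R.1 ∧ y ∈ R.2) ∧ f x y = z then μ x y else 0

/-- `μ_z = μ(f⁻¹(z))`. -/
def totalZ {X Y : Type} [Fintype X] [Fintype Y]
    (μ : X → Y → ℝ) (f : X → Y → Bool) (z : Bool) : ℝ :=
  ∑ x, ∑ y, if f x y = z then μ x y else 0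

/-- `|μ|`, the total mass of a measure. -/
def totalMass {X Y : Type} [Fintype X] [Fintype Y] (μ : X → Y → ℝ) : ℝ :=
  ∑ x, ∑ y, μ x y

/-- Restriction of a measure to a rectangle. -/
def restrictRect {X Y : Type} (μ : X → Y → ℝ) (R : Finset X × Finset Y) : X → Y → ℝ :=
  fun x y => if x ∈ R.1 ∧ y ∈ R.2 then μ x y else 0

/-- Distributional smooth rectangle bound `srec^{z,μ}_{ε,δ}(f)` (LP optimal value). -/
def srecZmu {X Y : Type} [Fintype X] [Fintype Y]
    (μ : X → Y → ℝ) (f : X → Y → Bool) (z : Bool) (ε δ : ℝ) : ℝ :=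
  sInf { v : ℝ | ∃ w : Finset X × Finset Y → ℝ,
    (∀ R, 0 ≤ w R) ∧
    ((1 - ε) * totalZ μ f z ≤ ∑ x, ∑ y, if f x y = z then μ x y * rcov w x y else 0) ∧
    (∀ x y, f x y ≠ z → rcov w x y ≤ δ) ∧
    (∀ x y, rcov w x y ≤ 1) ∧
    v = ∑ R : Finset X × Finset Y, w R }

/-- `srec^μ_{ε,δ}(f) = max{srec^{0,μ}_{ε,δ}(f), srec^{1,μ}_{ε,δ}(f)}`. -/
def srecMu {X Y : Type} [Fintype X] [Fintype Y]
    (μ : X → Y → ℝ) (f : X → Y → Bool) (ε δ : ℝ) : ℝ :=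
  max (srecZmu μ f false ε δ) (srecZmu μ f true ε δ)

/-- Smooth rectangle bound `srec^z_{ε,δ}(f)` (LP optimal value). -/
def srecZ {X Y : Type} [Fintype X] [Fintype Y]
    (f : X → Y → Bool) (z : Bool) (ε δ : ℝ) : ℝ :=
  sInf { v : ℝ | ∃ w : Finset X × Finset Y → ℝ,
    (∀ R, 0 ≤ w R) ∧
    (∀ x y, f x y = z → 1 - ε ≤ rcov w x y) ∧
    (∀ x y, f x y ≠ z → rcov w x y ≤ δ) ∧
    (∀ x y, rcov w x y ≤ 1) ∧
    v = ∑ R : Finset X × Finset Y, w R }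

/-- `srec_{ε,δ}(f) = max{srec^0_{ε,δ}(f), srec^1_{ε,δ}(f)}`. -/
def srec {X Y : Type} [Fintype X] [Fintype Y] (f : X → Y → Bool) (ε δ : ℝ) : ℝ :=
  max (srecZ f false ε δ) (srecZ f true ε δ)

/-- Partition bound `prt_ε(f)` (LP optimal value). -/
def prt {X Y : Type} [Fintype X] [Fintype Y] (f : X → Y → Bool) (ε : ℝ) : ℝ :=
  sInf { v : ℝ | ∃ w : Bool → Finset X × Finset Y → ℝ,
    (∀ z R, 0 ≤ w z R) ∧
    (∀ x y, 1 - ε ≤ rcov (w (f x y)) x y) ∧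
    (∀ x y, rcov (w false) x y + rcov (w true) x y = 1) ∧
    v = ∑ R : Finset X × Finset Y, (w false R + w true R) }

/-! ### General-output versions -/

/-- Smooth rectangle bound `srec^z_{ε,δ}(f)` for general output alphabet. -/
def srecZgen {X Y Z : Type} [Fintype X] [Fintype Y]
    (f : X → Y → Z) (z : Z) (ε δ : ℝ) : ℝ :=
  sInf { v : ℝ | ∃ w : Finset X × Finset Y → ℝ,
    (∀ R, 0 ≤ w R) ∧
    (∀ x y, f x y = z → 1 - ε ≤ rcov w x y) ∧
    (∀ x y, f x y ≠ z → rcov w x y ≤ δ) ∧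
    (∀ x y, rcov w x y ≤ 1) ∧
    v = ∑ R : Finset X × Finset Y, w R }

/-- `srec_{ε,δ}(f) = max_{z ∈ Z} srec^z_{ε,δ}(f)`. -/
def srecGen {X Y Z : Type} [Fintype X] [Fintype Y] [Fintype Z]
    (f : X → Y → Z) (ε δ : ℝ) : ℝ :=
  sSup (Set.range fun z : Z => srecZgen f z ε δ)

/-- Distributional smooth rectangle bound for general output alphabet. -/
def srecZmuGen {X Y Z : Type} [Fintype X] [Fintype Y]
    (μ : X → Y → ℝ) (f : X → Y → Z) (z : Z) (ε δ : ℝ) : ℝ :=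
  sInf { v : ℝ | ∃ w : Finset X × Finset Y → ℝ,
    (∀ R, 0 ≤ w R) ∧
    ((1 - ε) * (∑ x, ∑ y, if f x y = z then μ x y else 0) ≤
      ∑ x, ∑ y, if f x y = z then μ x y * rcov w x y else 0) ∧
    (∀ x y, f x y ≠ z → rcov w x y ≤ δ) ∧
    (∀ x y, rcov w x y ≤ 1) ∧
    v = ∑ R : Finset X × Finset Y, w R }

/-- `srec^μ_{ε,δ}(f) = max_{z ∈ Z} srec^{z,μ}_{ε,δ}(f)`. -/
def srecMuGen {X Y Z : Type} [Fintype X] [Fintype Y] [Fintype Z]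
    (μ : X → Y → ℝ) (f : X → Y → Z) (ε δ : ℝ) : ℝ :=
  sSup (Set.range fun z : Z => srecZmuGen μ f z ε δ)

/-- Partition bound for general output alphabet. -/
def prtGen {X Y Z : Type} [Fintype X] [Fintype Y] [Fintype Z]
    (f : X → Y → Z) (ε : ℝ) : ℝ :=
  sInf { v : ℝ | ∃ w : Z → Finset X × Finset Y → ℝ,
    (∀ z R, 0 ≤ w z R) ∧
    (∀ x y, 1 - ε ≤ rcov (w (f x y)) x y) ∧
    (∀ x y, (∑ z : Z, rcov (w z) x y) = 1) ∧
    v = ∑ z : Z, ∑ R : Finset X × Finset Y, w z R }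

/-! ## Decision trees, subcubes and the query partition bound -/

/-- Deterministic decision trees on `n` input bits. -/
inductive DTree (n : ℕ) : Type
  | leaf : Bool → DTree n
  | node : Fin n → DTree n → DTree n → DTree n

def DTree.eval {n : ℕ} : DTree n → (Fin n → Bool) → Bool
  | .leaf b, _ => b
  | .node i t0 t1, x => if x i then DTree.eval t1 x else DTree.eval t0 x

def DTree.depth {n : ℕ} : DTree n → ℕ
  | .leaf _ => 0
  | .node _ t0 t1 => max (DTree.depth t0) (DTree.depth t1) + 1

/-- Error of a decision tree w.r.t. the input distribution `μ`. -/
def qErr {n : ℕ} (μ : (Fin n → Bool) → ℝ) (g : (Fin n → Bool) → Bool) (T : DTree n) : ℝ :=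
  ∑ x, if T.eval x ≠ g x then μ x else 0

/-- Distributional query complexity `QC^μ_ε(g)`: minimum depth of a deterministic decision
tree erring with probability at most `ε` under `μ`. -/
def QCdist {n : ℕ} (μ : (Fin n → Bool) → ℝ) (g : (Fin n → Bool) → Bool) (ε : ℝ) : ℕ :=
  sInf {d : ℕ | ∃ T : DTree n, T.depth ≤ d ∧ qErr μ g T ≤ ε}

/-- A subcube of `{0,1}ⁿ`, given by its support pattern `s ∈ {0,1,⋆}ⁿ`. -/
abbrev Subcube (n : ℕ) := Fin n → Option Bool

/-- Membership in a subcube. -/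
def memCube {n : ℕ} (A : Subcube n) (x : Fin n → Bool) : Prop :=
  ∀ i, ∀ b, A i = some b → x i = b

/-- Size of (the support of) a subcube. -/
def cubeSize {n : ℕ} (A : Subcube n) : ℕ :=
  (Finset.univ.filter fun i => (A i).isSome).card

/-- Total weight of subcubes containing `x`. -/
def cubeCov {n : ℕ} (w : Subcube n → ℝ) (x : Fin n → Bool) : ℝ :=
  ∑ A : Subcube n, if memCube A x then w A else 0

/-- Query partition bound `qprt_ε(g)` (LP optimal value). -/
def qprt {n : ℕ} (g : (Fin n → Bool) → Bool) (ε : ℝ) : ℝ :=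
  sInf { v : ℝ | ∃ w : Bool → Subcube n → ℝ,
    (∀ z A, 0 ≤ w z A) ∧
    (∀ x, 1 - ε ≤ cubeCov (w (g x)) x) ∧
    (∀ x, cubeCov (w false) x + cubeCov (w true) x = 1) ∧
    v = ∑ A : Subcube n, (w false A + w true A) * 2 ^ cubeSize A }

/-- The bit-wise product distribution on `{0,1}ⁿ` with `p_i(1) = p i`, `p_i(0) = 1 - p i`. -/
def bitProd {n : ℕ} (p : Fin n → ℝ) : (Fin n → Bool) → ℝ :=
  fun x => ∏ i, if x i then p i else 1 - p i

/-- `μ(A)` for a subcube (or any set given by a membership predicate). -/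
def cubeMass {n : ℕ} (μ : (Fin n → Bool) → ℝ) (A : Subcube n) : ℝ :=
  ∑ x, if memCube A x then μ x else 0

/-- `μ_z(A) = μ(A ∩ g⁻¹(z))` for a subcube `A`. -/
def cubeMassZ {n : ℕ} (μ : (Fin n → Bool) → ℝ) (g : (Fin n → Bool) → Bool)
    (z : Bool) (A : Subcube n) : ℝ :=
  ∑ x, if memCube A x ∧ g x = z then μ x else 0

/-- `μ_z = μ(g⁻¹(z))`. -/
def qTotalZ {n : ℕ} (μ : (Fin n → Bool) → ℝ) (g : (Fin n → Bool) → Bool) (z : Bool) : ℝ :=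
  ∑ x, if g x = z then μ x else 0

/-- Mass of a finite set of pairs under the product measure `μA ⊗ μB`. -/
def pairMass {X Y : Type} (μA : X → ℝ) (μB : Y → ℝ) (A : Finset (X × Y)) : ℝ :=
  ∑ q ∈ A, μA q.1 * μB q.2

/-! ### Auxiliary machinery for Lemma 3.4 -/

namespace L34
open Finset

variable {n : ℕ}

lemma memCube_iff (ρ : Subcube n) (x : Fin n → Bool) :
    memCube ρ x ↔ ∀ i, (ρ i = none ∨ ρ i = some (x i)) := by
  constructor
  · intro h i
    cases hρ : ρ i with
    | none => exact Or.inl rfl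
    | some b => exact Or.inr (by rw [h i b hρ])
  · intro h i b hb
    rcases h i with h' | h'
    · rw [hb] at h'; cases h'
    · rw [hb] at h'; exact (Option.some.inj h').symm

lemma memCube_bot (x : Fin n → Bool) : memCube (fun _ => none : Subcube n) x := by
  intro i b h; cases h

/-- weighted set mass -/
noncomputable def WS (h : (Fin n → Bool) → ℝ) (P : (Fin n → Bool) → Prop) : ℝ :=
  ∑ x, if P x then h x else 0

/-- set mass under the product measure -/
noncomputable def SM (p : Fin n → ℝ) (P : (Fin n → Bool) → Prop) : ℝ :=
  WS (bitProd p) P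

lemma WS_nonneg {h : (Fin n → Bool) → ℝ} (hh : ∀ x, 0 ≤ h x) (P : (Fin n → Bool) → Prop) :
    0 ≤ WS h P :=
  Finset.sum_nonneg fun x _ => by by_cases hP : P x <;> simp [WS, hP, hh x]

lemma WS_mono_pred {h : (Fin n → Bool) → ℝ} (hh : ∀ x, 0 ≤ h x)
    {P Q : (Fin n → Bool) → Prop} (hPQ : ∀ x, P x → Q x) : WS h P ≤ WS h Q :=
  Finset.sum_le_sum fun x _ => by
    by_cases hP : P x
    · simp [hP, hPQ x hP]
    · by_cases hQ : Q x <;> simp [hP, hQ, hh x]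

lemma WS_mono_wt {h g : (Fin n → Bool) → ℝ} (P : (Fin n → Bool) → Prop)
    (hh : ∀ x, P x → h x ≤ g x) : WS h P ≤ WS g P :=
  Finset.sum_le_sum fun x _ => by
    by_cases hP : P x
    · simpa [hP] using hh x hP
    · simp [hP]

lemma WS_congr (h : (Fin n → Bool) → ℝ) {P Q : (Fin n → Bool) → Prop}
    (hPQ : ∀ x, P x ↔ Q x) : WS h P = WS h Q :=
  Finset.sum_congr rfl fun x _ => by rw [if_congr (hPQ x) rfl rfl]

lemma bitProd_nonneg {p : Fin n → ℝ} (hp : ∀ i, 0 ≤ p i ∧ p i ≤ 1) (x : Fin n → Bool) :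
    0 ≤ bitProd p x :=
  Finset.prod_nonneg fun i _ => by
    by_cases h : x i <;> simp [h, (hp i).1, sub_nonneg.2 (hp i).2]

lemma SM_nonneg {p : Fin n → ℝ} (hp : ∀ i, 0 ≤ p i ∧ p i ≤ 1) (P : (Fin n → Bool) → Prop) :
    0 ≤ SM p P :=
  Finset.sum_nonneg fun x _ => by
    by_cases h : P x <;> simp [h, bitProd_nonneg hp x]

lemma SM_mono {p : Fin n → ℝ} (hp : ∀ i, 0 ≤ p i ∧ p i ≤ 1) {P Q : (Fin n → Bool) → Prop}
    (h : ∀ x, P x → Q x) : SM p P ≤ SM p Q :=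
  Finset.sum_le_sum fun x _ => by
    by_cases hP : P x
    · simp [hP, h x hP]
    · by_cases hQ : Q x <;> simp [hP, hQ, bitProd_nonneg hp x]

lemma SM_congr (p : Fin n → ℝ) {P Q : (Fin n → Bool) → Prop} (h : ∀ x, P x ↔ Q x) :
    SM p P = SM p Q :=
  Finset.sum_congr rfl fun x _ => by rw [if_congr (h x) rfl rfl]

lemma SM_split (p : Fin n → ℝ) (f : (Fin n → Bool) → Bool) (P : (Fin n → Bool) → Prop) :
    SM p P = SM p (fun x => P x ∧ f x = false) + SM p (fun x => P x ∧ f x = true) := by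
  unfold SM WS
  rw [← Finset.sum_add_distrib]
  refine Finset.sum_congr rfl fun x _ => ?_
  cases hf : f x <;> by_cases hP : P x <;> simp [hf, hP]

lemma sum_prod_bool (g : Fin n → Bool → ℝ) :
    ∑ x : Fin n → Bool, ∏ i, g i (x i) = ∏ i, (g i false + g i true) := by
  rw [← Fintype.prod_sum]
  exact Finset.prod_congr rfl fun i _ => by rw [Fintype.sum_bool]; ring

/-- per-coordinate compatibility -/
def cOk (o : Option Bool) (v : Bool) : Prop := o = none ∨ o = some v

/-- per-coordinate factor -/
noncomputable def fac (pi : ℝ) (P : Bool → Prop) : ℝ :=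
  (if P false then (1 - pi) else 0) + (if P true then pi else 0)

lemma SM_fact (p : Fin n → ℝ) (Q : Fin n → Bool → Prop) :
    SM p (fun x => ∀ i, Q i (x i)) = ∏ i, fac (p i) (Q i) := by
  have step : SM p (fun x => ∀ i, Q i (x i))
      = ∑ x : Fin n → Bool, ∏ i, (if Q i (x i) then (if x i then p i else 1 - p i) else 0) := by
    unfold SM WS bitProd
    refine Finset.sum_congr rfl fun x _ => ?_
    by_cases h : ∀ i, Q i (x i)
    · simp [h]
    · rw [if_neg h]
      push_neg at h; obtain ⟨i, hi⟩ := h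
      exact (Finset.prod_eq_zero (Finset.mem_univ i) (by rw [if_neg hi])).symm
  rw [step, sum_prod_bool (fun i v => if Q i v then (if v then p i else 1 - p i) else 0)]
  unfold fac; simp

lemma memCube_forall (ρ : Subcube n) (x : Fin n → Bool) :
    memCube ρ x ↔ ∀ i, cOk (ρ i) (x i) := memCube_iff ρ x

lemma SM_fact1 (p : Fin n → ℝ) (ρ : Subcube n) :
    SM p (fun x => memCube ρ x) = ∏ i, fac (p i) (fun v => cOk (ρ i) v) := by
  rw [SM_congr p (fun x => (memCube_forall ρ x)), SM_fact]

lemma SM_fact2 (p : Fin n → ℝ) (ρ A : Subcube n) :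
    SM p (fun x => memCube ρ x ∧ memCube A x)
      = ∏ i, fac (p i) (fun v => cOk (ρ i) v ∧ cOk (A i) v) := by
  rw [SM_congr p (Q := fun x => ∀ i, cOk (ρ i) (x i) ∧ cOk (A i) (x i))
    (fun x => by rw [memCube_forall, memCube_forall, ← forall_and])]
  exact SM_fact p (fun i v => cOk (ρ i) v ∧ cOk (A i) v)

lemma SM_fact3 (p : Fin n → ℝ) (ρ A B : Subcube n) :
    SM p (fun x => memCube ρ x ∧ memCube A x ∧ memCube B x)
      = ∏ i, fac (p i) (fun v => cOk (ρ i) v ∧ cOk (A i) v ∧ cOk (B i) v) := by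
  rw [SM_congr p (Q := fun x => ∀ i, cOk (ρ i) (x i) ∧ cOk (A i) (x i) ∧ cOk (B i) (x i))
    (fun x => by
      rw [memCube_forall, memCube_forall, memCube_forall, ← forall_and, ← forall_and])]
  exact SM_fact p (fun i v => cOk (ρ i) v ∧ cOk (A i) v ∧ cOk (B i) v)

/-- independence of events on disjoint free coordinates -/
lemma indep (p : Fin n → ℝ) (ρ A B : Subcube n)
    (hesc : ∀ i, ¬(ρ i = none ∧ (A i).isSome ∧ (B i).isSome)) :
    SM p (fun x => memCube ρ x ∧ memCube A x) * SM p (fun x => memCube ρ x ∧ memCube B x)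
      = SM p (fun x => memCube ρ x)
        * SM p (fun x => memCube ρ x ∧ memCube A x ∧ memCube B x) := by
  rw [SM_fact1, SM_fact2, SM_fact2, SM_fact3, ← Finset.prod_mul_distrib,
    ← Finset.prod_mul_distrib]
  refine Finset.prod_congr rfl fun i _ => ?_
  have hi := hesc i
  rcases hρ : ρ i with _ | r
  · have hAB : A i = none ∨ B i = none := by
      by_contra hc
      push_neg at hc
      exact hi ⟨hρ, Option.isSome_iff_ne_none.2 hc.1, Option.isSome_iff_ne_none.2 hc.2⟩
    rcases hAB with hA | hB
    · rcases hB : B i with _ | b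
      · simp [fac, cOk, hA, hB]; try ring
      · rcases b <;> simp [fac, cOk, hA, hB] <;> try ring
    · rcases hA : A i with _ | a
      · simp [fac, cOk, hA, hB]; try ring
      · rcases a <;> simp [fac, cOk, hA, hB] <;> try ring
  · rcases hA : A i with _ | a
    · rcases hB : B i with _ | b
      · rcases r <;> simp [fac, cOk] <;> try ring
      · rcases r <;> rcases b <;> simp [fac, cOk] <;> try ring
    · rcases hB : B i with _ | b
      · rcases r <;> rcases a <;> simp [fac, cOk] <;> try ring
      · rcases r <;> rcases a <;> rcases b <;> simp [fac, cOk] <;> try ring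

/-- generic sum swap: weighted cube cover -/
lemma swapG (v : Subcube n → ℝ) (h : (Fin n → Bool) → ℝ) (Q : (Fin n → Bool) → Prop) :
    (∑ A : Subcube n, v A * WS h (fun x => Q x ∧ memCube A x))
      = WS (fun x => h x * cubeCov v x) Q := by
  calc (∑ A : Subcube n, v A * WS h (fun x => Q x ∧ memCube A x))
      = ∑ A : Subcube n, ∑ x, (if Q x ∧ memCube A x then v A * h x else 0) := by
        refine Finset.sum_congr rfl fun A _ => ?_
        simp only [WS]
        rw [Finset.mul_sum]
        exact Finset.sum_congr rfl fun x _ => by split_ifs <;> first | ring | (exfalso; tauto)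
    _ = ∑ x, ∑ A : Subcube n, (if Q x ∧ memCube A x then v A * h x else 0) :=
        Finset.sum_comm
    _ = WS (fun x => h x * cubeCov v x) Q := by
        simp only [WS]
        refine Finset.sum_congr rfl fun x _ => ?_
        by_cases hQ : Q x
        · rw [if_pos hQ]
          unfold cubeCov
          rw [Finset.mul_sum]
          refine Finset.sum_congr rfl fun A _ => ?_
          by_cases hA : memCube A x
          · rw [if_pos hA, if_pos ⟨hQ, hA⟩]; ring
          · rw [if_neg hA, if_neg (fun hc => hA hc.2)]; ring
        · rw [if_neg hQ]
          exact Finset.sum_eq_zero fun A _ => by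
            rw [if_neg (fun hc => hQ hc.1)]

lemma swap1 (p : Fin n → ℝ) (v : Subcube n → ℝ) (Q : (Fin n → Bool) → Prop) :
    (∑ A : Subcube n, v A * SM p (fun x => Q x ∧ memCube A x))
      = WS (fun x => bitProd p x * cubeCov v x) Q :=
  swapG v (bitProd p) Q

lemma swap2 (p : Fin n → ℝ) (v1 v2 : Subcube n → ℝ) (Q : (Fin n → Bool) → Prop) :
    (∑ A : Subcube n, ∑ B : Subcube n,
        v1 A * v2 B * SM p (fun x => Q x ∧ memCube A x ∧ memCube B x))
      = WS (fun x => bitProd p x * cubeCov v1 x * cubeCov v2 x) Q := by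
  have inner : ∀ A : Subcube n,
      (∑ B : Subcube n, v1 A * v2 B * SM p (fun x => Q x ∧ memCube A x ∧ memCube B x))
        = v1 A * WS (fun x => bitProd p x * cubeCov v2 x) (fun x => Q x ∧ memCube A x) := by
    intro A
    have e2 := swapG v2 (bitProd p) (fun x => Q x ∧ memCube A x)
    rw [← e2, Finset.mul_sum]
    refine Finset.sum_congr rfl fun B _ => ?_
    rw [SM_congr p (Q := fun x => (Q x ∧ memCube A x) ∧ memCube B x) (fun x => by tauto)]
    unfold SM
    ring
  calc (∑ A : Subcube n, ∑ B : Subcube n,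
        v1 A * v2 B * SM p (fun x => Q x ∧ memCube A x ∧ memCube B x))
      = ∑ A : Subcube n,
          v1 A * WS (fun x => bitProd p x * cubeCov v2 x) (fun x => Q x ∧ memCube A x) :=
        Finset.sum_congr rfl fun A _ => inner A
    _ = WS (fun x => (bitProd p x * cubeCov v2 x) * cubeCov v1 x) Q :=
        swapG v1 (fun x => bitProd p x * cubeCov v2 x) Q
    _ = WS (fun x => bitProd p x * cubeCov v1 x * cubeCov v2 x) Q :=
        Finset.sum_congr rfl fun x _ => by split_ifs <;> ring

/-! ### quantities attached to a node -/

/-- mass of a node -/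
noncomputable def mC (p : Fin n → ℝ) (ρ : Subcube n) : ℝ := SM p (fun x => memCube ρ x)

/-- mass of the z-part of a node -/
noncomputable def mz (p : Fin n → ℝ) (f : (Fin n → Bool) → Bool) (z : Bool) (ρ : Subcube n) : ℝ :=
  SM p (fun x => memCube ρ x ∧ f x = z)

/-- mass of node ∩ cube ∩ f⁻¹(1) -/
noncomputable def SB1 (p : Fin n → ℝ) (f : (Fin n → Bool) → Bool) (ρ B : Subcube n) : ℝ :=
  SM p (fun x => memCube ρ x ∧ memCube B x ∧ f x = true)

/-- total w-weight of cubes implied by the node -/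
noncomputable def Zf (w : Subcube n → ℝ) (ρ : Subcube n) : ℝ :=
  ∑ B : Subcube n, if (∀ i b, B i = some b → ρ i = some b) then w B else 0

/-- number of unqueried support coordinates -/
def gB (B ρ : Subcube n) : ℕ := (Finset.univ.filter fun i => (B i).isSome ∧ ρ i = none).card

/-- orphan mass -/
noncomputable def ORPH (p : Fin n → ℝ) (f : (Fin n → Bool) → Bool) (w : Subcube n → ℝ)
    (ρ : Subcube n) (k : ℕ) : ℝ :=
  ∑ B : Subcube n, if k + 1 ≤ gB B ρ then w B * SB1 p f ρ B else 0

/-- the cube B escapes the query of (the free support of) A at node ρ -/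
def esc (ρ A B : Subcube n) : Prop := ∀ i, ¬(ρ i = none ∧ (A i).isSome ∧ (B i).isSome)

/-- escape mass of a query -/
noncomputable def PM (p : Fin n → ℝ) (f : (Fin n → Bool) → Bool) (w : Subcube n → ℝ)
    (ρ A : Subcube n) : ℝ :=
  ∑ B : Subcube n, if esc ρ A B then w B * SB1 p f ρ B else 0

/-- uncovered 1-mass of a node -/
noncomputable def uncov (p : Fin n → ℝ) (f : (Fin n → Bool) → Bool) (w : Subcube n → ℝ)
    (ρ : Subcube n) : ℝ :=
  WS (fun x => bitProd p x * (1 - cubeCov w x)) (fun x => memCube ρ x ∧ f x = true)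

/-- error mass of a tree on a node -/
noncomputable def Errm (p : Fin n → ℝ) (f : (Fin n → Bool) → Bool) (ρ : Subcube n)
    (T : DTree n) : ℝ :=
  WS (bitProd p) (fun x => memCube ρ x ∧ T.eval x ≠ f x)

/-- per-phase escape cost -/
noncomputable def cconst (α0 β0 β1 : ℝ) : ℝ := β1 + 4 * β0 / (1 - α0)

lemma cubeCov_nonneg {v : Subcube n → ℝ} (hv : ∀ A, 0 ≤ v A) (x : Fin n → Bool) :
    0 ≤ cubeCov v x :=
  Finset.sum_nonneg fun A _ => by by_cases h : memCube A x <;> simp [h, hv A]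

lemma WS_smul (c : ℝ) (h : (Fin n → Bool) → ℝ) (P : (Fin n → Bool) → Prop) :
    WS (fun x => c * h x) P = c * WS h P := by
  unfold WS
  rw [Finset.mul_sum]
  exact Finset.sum_congr rfl fun x _ => by split_ifs <;> simp

section Exist

variable {p : Fin n → ℝ} {f : (Fin n → Bool) → Bool} {u w : Subcube n → ℝ}
  {α0 β0 β1 : ℝ}

/-- Existence of a good query cube. -/
lemma exist_good (hp : ∀ i, 0 ≤ p i ∧ p i ≤ 1) (hα0' : α0 < 1) (hβ0 : 0 ≤ β0)
    (hβ1 : 0 ≤ β1) (hu0 : ∀ A, 0 ≤ u A) (hw0 : ∀ A, 0 ≤ w A)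
    (hcov0 : ∀ x, f x = false → 1 - α0 ≤ cubeCov u x)
    (hpack0 : ∀ x, f x = true → cubeCov u x ≤ β0)
    (hone1 : ∀ x, cubeCov w x ≤ 1)
    (hpack1 : ∀ x, f x = false → cubeCov w x ≤ β1)
    (ρ : Subcube n) (h3 : ¬ (4 * mz p f false ρ ≤ mC p ρ)) :
    ∃ A, u A ≠ 0 ∧ PM p f w ρ A ≤ cconst α0 β0 β1 * mC p ρ := by
  have hμ : ∀ x, 0 ≤ bitProd p x := bitProd_nonneg hp
  have hU0 : ∀ x, 0 ≤ cubeCov u x := cubeCov_nonneg hu0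
  have hW0 : ∀ x, 0 ≤ cubeCov w x := cubeCov_nonneg hw0
  set m := mC p ρ with hm_def
  set m0 := mz p f false ρ with hm0_def
  set m1 := mz p f true ρ with hm1_def
  have hm0le : m0 ≤ m := SM_mono hp fun x h => h.1
  have hm1le : m1 ≤ m := SM_mono hp fun x h => h.1
  have hm0nn : 0 ≤ m0 := SM_nonneg hp _
  have h4 : m < 4 * m0 := lt_of_not_ge h3
  have hm0pos : 0 < m0 := by linarith
  have hm_pos : 0 < m := lt_of_lt_of_le hm0pos hm0le
  set N := ∑ A : Subcube n, u A * SM p (fun x => memCube ρ x ∧ memCube A x) with hN_def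
  have hNsw : N = WS (fun x => bitProd p x * cubeCov u x) (fun x => memCube ρ x) :=
    swap1 p u (fun x => memCube ρ x)
  have hN1 : (1 - α0) * m0 ≤ N := by
    rw [hNsw]
    calc (1 - α0) * m0
        = WS (fun x => (1 - α0) * bitProd p x) (fun x => memCube ρ x ∧ f x = false) :=
          (WS_smul _ _ _).symm
      _ ≤ WS (fun x => bitProd p x * cubeCov u x) (fun x => memCube ρ x ∧ f x = false) :=
          WS_mono_wt _ (fun x hx => by
            have h1 := hcov0 x hx.2
            have h2 := hμ x
            nlinarith)
      _ ≤ WS (fun x => bitProd p x * cubeCov u x) (fun x => memCube ρ x) :=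
          WS_mono_pred (fun x => mul_nonneg (hμ x) (hU0 x)) (fun x h => h.1)
  have hNpos : 0 < N := lt_of_lt_of_le (mul_pos (by linarith) hm0pos) hN1
  -- the key averaged upper bound
  have key : (∑ A : Subcube n, u A * (SM p (fun x => memCube ρ x ∧ memCube A x) * PM p f w ρ A))
      ≤ m * (β1 * N + β0 * m1) := by
    have eA : ∀ A : Subcube n,
        u A * (SM p (fun x => memCube ρ x ∧ memCube A x) * PM p f w ρ A)
          = ∑ B : Subcube n, (if esc ρ A B then
              u A * (SM p (fun x => memCube ρ x ∧ memCube A x) * (w B * SB1 p f ρ B)) else 0) := by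
      intro A
      unfold PM
      rw [← mul_assoc, Finset.mul_sum]
      exact Finset.sum_congr rfl fun B _ => by split_ifs <;> ring
    have step1 : ∀ (A B : Subcube n), (if esc ρ A B then
          u A * (SM p (fun x => memCube ρ x ∧ memCube A x) * (w B * SB1 p f ρ B)) else 0)
        ≤ u A * w B * (m *
            (SM p (fun x => (memCube ρ x ∧ f x = false) ∧ memCube A x ∧ memCube B x)
            + SM p (fun x => (memCube ρ x ∧ f x = true) ∧ memCube A x ∧ memCube B x))) := by
      intro A B
      have hT0 : (0:ℝ) ≤ SM p (fun x => (memCube ρ x ∧ f x = false) ∧ memCube A x ∧ memCube B x) :=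
        SM_nonneg hp _
      have hT1 : (0:ℝ) ≤ SM p (fun x => (memCube ρ x ∧ f x = true) ∧ memCube A x ∧ memCube B x) :=
        SM_nonneg hp _
      split_ifs with hesc
      · -- escape case: use independence
        have hmono : SB1 p f ρ B ≤ SM p (fun x => memCube ρ x ∧ memCube B x) :=
          SM_mono hp fun x h => ⟨h.1, h.2.1⟩
        have hSA : (0:ℝ) ≤ SM p (fun x => memCube ρ x ∧ memCube A x) := SM_nonneg hp _
        have hSB1 : (0:ℝ) ≤ SB1 p f ρ B := SM_nonneg hp _
        have hind := indep p ρ A B hesc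
        have hsplit : SM p (fun x => memCube ρ x ∧ memCube A x ∧ memCube B x)
            = SM p (fun x => (memCube ρ x ∧ f x = false) ∧ memCube A x ∧ memCube B x)
              + SM p (fun x => (memCube ρ x ∧ f x = true) ∧ memCube A x ∧ memCube B x) := by
          rw [SM_split p f (fun x => memCube ρ x ∧ memCube A x ∧ memCube B x)]
          congr 1
          · exact SM_congr p fun x => by tauto
          · exact SM_congr p fun x => by tauto
        have hprod : SM p (fun x => memCube ρ x ∧ memCube A x) * SB1 p f ρ B
            ≤ m * (SM p (fun x => (memCube ρ x ∧ f x = false) ∧ memCube A x ∧ memCube B x)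
              + SM p (fun x => (memCube ρ x ∧ f x = true) ∧ memCube A x ∧ memCube B x)) := by
          calc SM p (fun x => memCube ρ x ∧ memCube A x) * SB1 p f ρ B
              ≤ SM p (fun x => memCube ρ x ∧ memCube A x)
                  * SM p (fun x => memCube ρ x ∧ memCube B x) :=
                mul_le_mul_of_nonneg_left hmono hSA
            _ = m * SM p (fun x => memCube ρ x ∧ memCube A x ∧ memCube B x) := hind
            _ = m * (SM p (fun x => (memCube ρ x ∧ f x = false) ∧ memCube A x ∧ memCube B x)
              + SM p (fun x => (memCube ρ x ∧ f x = true) ∧ memCube A x ∧ memCube B x)) := by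
                rw [hsplit]
        have huw : 0 ≤ u A * w B := mul_nonneg (hu0 A) (hw0 B)
        calc u A * (SM p (fun x => memCube ρ x ∧ memCube A x) * (w B * SB1 p f ρ B))
            = (u A * w B) * (SM p (fun x => memCube ρ x ∧ memCube A x) * SB1 p f ρ B) := by ring
          _ ≤ (u A * w B) * (m *
              (SM p (fun x => (memCube ρ x ∧ f x = false) ∧ memCube A x ∧ memCube B x)
              + SM p (fun x => (memCube ρ x ∧ f x = true) ∧ memCube A x ∧ memCube B x))) :=
              mul_le_mul_of_nonneg_left hprod huw
      · exact mul_nonneg (mul_nonneg (hu0 A) (hw0 B))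
          (mul_nonneg (le_of_lt hm_pos) (add_nonneg hT0 hT1))
    calc (∑ A : Subcube n, u A * (SM p (fun x => memCube ρ x ∧ memCube A x) * PM p f w ρ A))
        = ∑ A : Subcube n, ∑ B : Subcube n, (if esc ρ A B then
            u A * (SM p (fun x => memCube ρ x ∧ memCube A x) * (w B * SB1 p f ρ B)) else 0) :=
          Finset.sum_congr rfl fun A _ => eA A
      _ ≤ ∑ A : Subcube n, ∑ B : Subcube n, (u A * w B * (m *
            (SM p (fun x => (memCube ρ x ∧ f x = false) ∧ memCube A x ∧ memCube B x)
            + SM p (fun x => (memCube ρ x ∧ f x = true) ∧ memCube A x ∧ memCube B x)))) :=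
          Finset.sum_le_sum fun A _ => Finset.sum_le_sum fun B _ => step1 A B
      _ = m * ((∑ A : Subcube n, ∑ B : Subcube n, u A * w B *
              SM p (fun x => (memCube ρ x ∧ f x = false) ∧ memCube A x ∧ memCube B x))
            + (∑ A : Subcube n, ∑ B : Subcube n, u A * w B *
              SM p (fun x => (memCube ρ x ∧ f x = true) ∧ memCube A x ∧ memCube B x))) := by
          rw [mul_add m, Finset.mul_sum, Finset.mul_sum, ← Finset.sum_add_distrib]
          refine Finset.sum_congr rfl fun A _ => ?_
          rw [Finset.mul_sum, Finset.mul_sum, ← Finset.sum_add_distrib]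
          exact Finset.sum_congr rfl fun B _ => by ring
      _ = m * ((WS (fun x => bitProd p x * cubeCov u x * cubeCov w x)
              (fun x => memCube ρ x ∧ f x = false))
            + (WS (fun x => bitProd p x * cubeCov u x * cubeCov w x)
              (fun x => memCube ρ x ∧ f x = true))) := by
          rw [swap2 p u w (fun x => memCube ρ x ∧ f x = false),
            swap2 p u w (fun x => memCube ρ x ∧ f x = true)]
      _ ≤ m * (β1 * N + β0 * m1) := by
          have b0 : (WS (fun x => bitProd p x * cubeCov u x * cubeCov w x)
              (fun x => memCube ρ x ∧ f x = false)) ≤ β1 * N := by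
            have s1 : (WS (fun x => bitProd p x * cubeCov u x * cubeCov w x)
                (fun x => memCube ρ x ∧ f x = false))
                ≤ (WS (fun x => β1 * (bitProd p x * cubeCov u x))
                  (fun x => memCube ρ x ∧ f x = false)) :=
              WS_mono_wt _ (fun x hx => by
                have h1 := hpack1 x hx.2
                have h2 := mul_nonneg (hμ x) (hU0 x)
                nlinarith)
            have s2 : (WS (fun x => β1 * (bitProd p x * cubeCov u x))
                (fun x => memCube ρ x ∧ f x = false))
                = β1 * (WS (fun x => bitProd p x * cubeCov u x)
                  (fun x => memCube ρ x ∧ f x = false)) := WS_smul _ _ _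
            have s3 : (WS (fun x => bitProd p x * cubeCov u x)
                (fun x => memCube ρ x ∧ f x = false))
                ≤ (WS (fun x => bitProd p x * cubeCov u x) (fun x => memCube ρ x)) :=
              WS_mono_pred (fun x => mul_nonneg (hμ x) (hU0 x)) (fun x h => h.1)
            have s4 := mul_le_mul_of_nonneg_left s3 hβ1
            rw [← hNsw] at s4
            linarith
          have b1 : (WS (fun x => bitProd p x * cubeCov u x * cubeCov w x)
              (fun x => memCube ρ x ∧ f x = true)) ≤ β0 * m1 := by
            have s1 : (WS (fun x => bitProd p x * cubeCov u x * cubeCov w x)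
                (fun x => memCube ρ x ∧ f x = true))
                ≤ (WS (fun x => β0 * bitProd p x) (fun x => memCube ρ x ∧ f x = true)) :=
              WS_mono_wt _ (fun x hx => by
                have h1 := hpack0 x hx.2
                have h2 := hone1 x
                have h3 := hμ x
                have h4 := hU0 x
                have h5 := hW0 x
                have t1 : bitProd p x * cubeCov u x * cubeCov w x
                    ≤ bitProd p x * cubeCov u x * 1 :=
                  mul_le_mul_of_nonneg_left h2 (mul_nonneg h3 h4)
                have t2 : bitProd p x * cubeCov u x ≤ bitProd p x * β0 :=
                  mul_le_mul_of_nonneg_left h1 h3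
                nlinarith)
            have s2 : (WS (fun x => β0 * bitProd p x) (fun x => memCube ρ x ∧ f x = true))
                = β0 * (WS (bitProd p) (fun x => memCube ρ x ∧ f x = true)) := WS_smul _ _ _
            have s3 : m1 = WS (bitProd p) (fun x => memCube ρ x ∧ f x = true) := rfl
            rw [s2] at s1
            rw [s3]
            exact s1
          have hsum := add_le_add b0 b1
          exact mul_le_mul_of_nonneg_left hsum (le_of_lt hm_pos)
  -- extract a good cube
  by_contra hcon
  push_neg at hcon
  have hstrict : ∃ A : Subcube n, 0 < u A * SM p (fun x => memCube ρ x ∧ memCube A x) := by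
    by_contra hno
    push_neg at hno
    have : N ≤ 0 := Finset.sum_nonpos fun A _ => hno A
    linarith
  obtain ⟨A0, hA0⟩ := hstrict
  have hA0ne : u A0 ≠ 0 := by
    intro h0
    rw [h0, zero_mul] at hA0
    exact lt_irrefl 0 hA0
  have hlow : ∀ A : Subcube n,
      u A * SM p (fun x => memCube ρ x ∧ memCube A x) * (cconst α0 β0 β1 * m)
        ≤ u A * (SM p (fun x => memCube ρ x ∧ memCube A x) * PM p f w ρ A) := by
    intro A
    by_cases hA : u A = 0
    · simp [hA]
    · have h1 : cconst α0 β0 β1 * m ≤ PM p f w ρ A := le_of_lt (hcon A hA)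
      have h2 : 0 ≤ u A * SM p (fun x => memCube ρ x ∧ memCube A x) :=
        mul_nonneg (hu0 A) (SM_nonneg hp _)
      calc u A * SM p (fun x => memCube ρ x ∧ memCube A x) * (cconst α0 β0 β1 * m)
          ≤ u A * SM p (fun x => memCube ρ x ∧ memCube A x) * PM p f w ρ A :=
            mul_le_mul_of_nonneg_left h1 h2
        _ = u A * (SM p (fun x => memCube ρ x ∧ memCube A x) * PM p f w ρ A) := by ring
  have hlt : (∑ A : Subcube n, u A * SM p (fun x => memCube ρ x ∧ memCube A x) * (cconst α0 β0 β1 * m))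
      < ∑ A : Subcube n, u A * (SM p (fun x => memCube ρ x ∧ memCube A x) * PM p f w ρ A) := by
    refine Finset.sum_lt_sum (fun A _ => hlow A) ⟨A0, Finset.mem_univ A0, ?_⟩
    have h1 : cconst α0 β0 β1 * m < PM p f w ρ A0 := hcon A0 hA0ne
    calc u A0 * SM p (fun x => memCube ρ x ∧ memCube A0 x) * (cconst α0 β0 β1 * m)
        < u A0 * SM p (fun x => memCube ρ x ∧ memCube A0 x) * PM p f w ρ A0 :=
          (mul_lt_mul_iff_right₀ hA0).2 h1
      _ = u A0 * (SM p (fun x => memCube ρ x ∧ memCube A0 x) * PM p f w ρ A0) := by ring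
  have hfac : (∑ A : Subcube n, u A * SM p (fun x => memCube ρ x ∧ memCube A x) * (cconst α0 β0 β1 * m))
      = cconst α0 β0 β1 * m * N := by
    rw [hN_def, Finset.mul_sum]
    exact Finset.sum_congr rfl fun A _ => by ring
  -- final numeric contradiction
  have hfin : m * (β1 * N + β0 * m1) ≤ cconst α0 β0 β1 * m * N := by
    have hα : (0:ℝ) < 1 - α0 := by linarith
    set D := 4 * β0 / (1 - α0) with hD_def
    have hD : D * (1 - α0) = 4 * β0 := by
      rw [hD_def]; exact div_mul_cancel₀ _ (ne_of_gt hα)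
    have hDnn : 0 ≤ D := div_nonneg (by linarith) (le_of_lt hα)
    have hcc : cconst α0 β0 β1 = β1 + D := rfl
    rw [hcc]
    have h5 : D * m * ((1 - α0) * m0) ≤ D * m * N :=
      mul_le_mul_of_nonneg_left hN1 (mul_nonneg hDnn (le_of_lt hm_pos))
    have h6 : D * m * ((1 - α0) * m0) = 4 * β0 * m * m0 := by
      have : D * m * ((1 - α0) * m0) = (D * (1 - α0)) * m * m0 := by ring
      rw [this, hD]
    have h7 : β0 * m * m1 ≤ β0 * m * m := by
      have := mul_le_mul_of_nonneg_left hm1le (mul_nonneg hβ0 (le_of_lt hm_pos))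
      linarith [this]
    have h8 : β0 * m * m ≤ 4 * β0 * m * m0 := by
      have h9 : 0 ≤ β0 * m := mul_nonneg hβ0 (le_of_lt hm_pos)
      nlinarith
    nlinarith
  rw [hfac] at hlt
  linarith

/-! ### querying a list of variables -/

/-- overwrite ρ on the coordinates in l with the values of x -/
def OvL (l : List (Fin n)) (ρ : Subcube n) (x : Fin n → Bool) : Subcube n :=
  fun j => if j ∈ l then some (x j) else ρ j

/-- the tree querying all variables in l, then continuing -/
def queryList : List (Fin n) → Subcube n → (Subcube n → DTree n) → DTree n
  | [], ρ, c => c ρ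
  | i :: is, ρ, c =>
      DTree.node i (queryList is (fun j => if j = i then some false else ρ j) c)
                   (queryList is (fun j => if j = i then some true else ρ j) c)

lemma OvL_update (i : Fin n) (is : List (Fin n)) (ρ : Subcube n) (x : Fin n → Bool) :
    OvL is (fun j => if j = i then some (x i) else ρ j) x = OvL (i :: is) ρ x := by
  funext j
  unfold OvL
  by_cases hj : j ∈ is
  · simp [hj]
  · by_cases hji : j = i
    · subst hji; simp [hj]
    · simp [hj, hji]

lemma queryList_eval (c : Subcube n → DTree n) (x : Fin n → Bool) :
    ∀ (l : List (Fin n)) (ρ : Subcube n),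
      (queryList l ρ c).eval x = (c (OvL l ρ x)).eval x := by
  intro l
  induction l with
  | nil =>
      intro ρ
      have : OvL [] ρ x = ρ := by funext j; simp [OvL]
      rw [this]
      rfl
  | cons i is ih =>
      intro ρ
      have hnode : (queryList (i :: is) ρ c).eval x
          = if x i then (queryList is (fun j => if j = i then some true else ρ j) c).eval x
            else (queryList is (fun j => if j = i then some false else ρ j) c).eval x := rfl
      rw [hnode]
      by_cases hx : x i
      · rw [if_pos hx, ih]
        have : (fun j => if j = i then some true else ρ j)
            = (fun j => if j = i then some (x i) else ρ j) := by
          funext j; by_cases hj : j = i <;> simp [hj, hx]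
        rw [this, OvL_update]
      · rw [if_neg hx, ih]
        have hx' : x i = false := by simpa using hx
        have : (fun j => if j = i then some false else ρ j)
            = (fun j => if j = i then some (x i) else ρ j) := by
          funext j; by_cases hj : j = i <;> simp [hj, hx']
        rw [this, OvL_update]

lemma queryList_depth (c : Subcube n → DTree n) (D : ℕ) (hD : ∀ ρ', (c ρ').depth ≤ D) :
    ∀ (l : List (Fin n)) (ρ : Subcube n), (queryList l ρ c).depth ≤ l.length + D := by
  intro l
  induction l with
  | nil => intro ρ; simpa [queryList] using hD ρ
  | cons i is ih =>
      intro ρ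
      show (DTree.node i _ _).depth ≤ _
      unfold DTree.depth
      have h1 := ih (fun j => if j = i then some false else ρ j)
      have h2 := ih (fun j => if j = i then some true else ρ j)
      simp only [List.length_cons]
      omega

/-- the children cubes after querying l -/
noncomputable def Chl (ρ : Subcube n) (l : List (Fin n)) : Finset (Subcube n) :=
  Finset.image (OvL l ρ) Finset.univ

lemma OvL_mem_self {l : List (Fin n)} {ρ : Subcube n} {x : Fin n → Bool}
    (hx : memCube ρ x) : memCube (OvL l ρ x) x := by
  intro j b hb
  unfold OvL at hb
  by_cases hj : j ∈ l
  · rw [if_pos hj] at hb; exact Option.some.inj hb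
  · rw [if_neg hj] at hb; exact hx j b hb

lemma OvL_unique {l : List (Fin n)} {ρ : Subcube n} {x x0 : Fin n → Bool}
    (hx : memCube (OvL l ρ x0) x) : OvL l ρ x = OvL l ρ x0 := by
  funext j
  unfold OvL
  by_cases hj : j ∈ l
  · rw [if_pos hj, if_pos hj]
    have := hx j (x0 j) (by unfold OvL; rw [if_pos hj])
    rw [this]
  · rw [if_neg hj, if_neg hj]

lemma mem_of_child {l : List (Fin n)} {ρ : Subcube n} (hl : ∀ i ∈ l, ρ i = none)
    {x x0 : Fin n → Bool} (hx : memCube (OvL l ρ x0) x) : memCube ρ x := by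
  intro j b hb
  by_cases hj : j ∈ l
  · rw [hl j hj] at hb; cases hb
  · exact hx j b (by unfold OvL; rw [if_neg hj]; exact hb)

/-- pointwise counting: each x in ρ lies in exactly one child -/
lemma child_count {l : List (Fin n)} {ρ : Subcube n} (hl : ∀ i ∈ l, ρ i = none)
    (x : Fin n → Bool) (r : ℝ) :
    (∑ ρ' ∈ Chl ρ l, if memCube ρ' x then r else 0) = if memCube ρ x then r else 0 := by
  by_cases hx : memCube ρ x
  · rw [if_pos hx]
    rw [Finset.sum_eq_single (OvL l ρ x)]
    · rw [if_pos (OvL_mem_self hx)]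
    · intro b hb hbne
      rcases Finset.mem_image.1 hb with ⟨x0, _, hx0⟩
      subst hx0
      by_cases hmem : memCube (OvL l ρ x0) x
      · exact absurd (OvL_unique hmem).symm hbne
      · rw [if_neg hmem]
    · intro hni
      exact absurd (Finset.mem_image.2 ⟨x, Finset.mem_univ x, rfl⟩) hni
  · rw [if_neg hx]
    refine Finset.sum_eq_zero fun ρ' hρ' => ?_
    rcases Finset.mem_image.1 hρ' with ⟨x0, _, hx0⟩
    subst hx0
    by_cases hmem : memCube (OvL l ρ x0) x
    · exact absurd (mem_of_child hl hmem) hx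
    · rw [if_neg hmem]

/-- partition of a node mass into children masses -/
lemma partition {l : List (Fin n)} {ρ : Subcube n} (hl : ∀ i ∈ l, ρ i = none)
    (h : (Fin n → Bool) → ℝ) :
    WS h (fun x => memCube ρ x) = ∑ ρ' ∈ Chl ρ l, WS h (fun x => memCube ρ' x) := by
  unfold WS
  rw [Finset.sum_comm]
  exact Finset.sum_congr rfl fun x _ => (child_count hl x (h x)).symm

end Exist

/-! ### the tree construction -/

section Build

variable {p : Fin n → ℝ} {f : (Fin n → Bool) → Bool} {u w : Subcube n → ℝ}
  {α0 β0 β1 : ℝ}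

lemma WS_add (h1 h2 : (Fin n → Bool) → ℝ) (P : (Fin n → Bool) → Prop) :
    WS (fun x => h1 x + h2 x) P = WS h1 P + WS h2 P := by
  unfold WS
  rw [← Finset.sum_add_distrib]
  exact Finset.sum_congr rfl fun x _ => by split_ifs <;> simp

lemma WS_congr_wt {h1 h2 : (Fin n → Bool) → ℝ} (P : (Fin n → Bool) → Prop)
    (hh : ∀ x, P x → h1 x = h2 x) : WS h1 P = WS h2 P :=
  Finset.sum_congr rfl fun x _ => by
    by_cases hP : P x
    · rw [if_pos hP, if_pos hP, hh x hP]
    · rw [if_neg hP, if_neg hP]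

lemma Zf_le_W (hw0 : ∀ A, 0 ≤ w A) {ρ : Subcube n} {x : Fin n → Bool}
    (hx : memCube ρ x) : Zf w ρ ≤ cubeCov w x := by
  unfold Zf cubeCov
  refine Finset.sum_le_sum fun B _ => ?_
  by_cases hB : ∀ i b, B i = some b → ρ i = some b
  · rw [if_pos hB, if_pos (show memCube B x from fun i b hb => hx i b (hB i b hb))]
  · rw [if_neg hB]
    by_cases hBx : memCube B x
    · rw [if_pos hBx]; exact hw0 B
    · rw [if_neg hBx]

lemma mz_false_zero (hp : ∀ i, 0 ≤ p i ∧ p i ≤ 1) (hw0 : ∀ A, 0 ≤ w A)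
    (hpack1 : ∀ x, f x = false → cubeCov w x ≤ β1)
    {ρ : Subcube n} (h2 : β1 < Zf w ρ) : mz p f false ρ = 0 := by
  unfold mz SM WS
  refine Finset.sum_eq_zero fun x _ => ?_
  by_cases h : memCube ρ x ∧ f x = false
  · exfalso
    have ha := hpack1 x h.2
    have hb := Zf_le_W hw0 h.1
    linarith
  · rw [if_neg h]

lemma Errm_leaf_true (ρ : Subcube n) :
    Errm p f ρ (DTree.leaf true) = mz p f false ρ := by
  unfold Errm mz SM
  exact WS_congr _ fun x => by cases hf : f x <;> simp [DTree.eval, hf]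

lemma Errm_leaf_false (ρ : Subcube n) :
    Errm p f ρ (DTree.leaf false) = mz p f true ρ := by
  unfold Errm mz SM
  exact WS_congr _ fun x => by cases hf : f x <;> simp [DTree.eval, hf]

lemma SB1_as (ρ B : Subcube n) :
    SB1 p f ρ B
      = WS (fun x => if memCube B x ∧ f x = true then bitProd p x else 0)
          (fun x => memCube ρ x) := by
  unfold SB1 SM WS
  refine Finset.sum_congr rfl fun x _ => ?_
  by_cases h1 : memCube ρ x <;> by_cases h2 : memCube B x <;> by_cases h3 : f x = true <;>
    simp [h1, h2, h3]

lemma uncov_as (ρ : Subcube n) :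
    uncov p f w ρ
      = WS (fun x => if f x = true then bitProd p x * (1 - cubeCov w x) else 0)
          (fun x => memCube ρ x) := by
  unfold uncov WS
  refine Finset.sum_congr rfl fun x _ => ?_
  by_cases h1 : memCube ρ x <;> by_cases h2 : f x = true <;> simp [h1, h2]

/-- base case bound -/
lemma base_bound (hp : ∀ i, 0 ≤ p i ∧ p i ≤ 1) (hβ1 : 0 ≤ β1) (hw0 : ∀ A, 0 ≤ w A)
    {ρ : Subcube n} (h2 : ¬ β1 < Zf w ρ) :
    mz p f true ρ ≤ uncov p f w ρ + β1 * mC p ρ + ORPH p f w ρ 0 := by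
  have hμ : ∀ x, 0 ≤ bitProd p x := bitProd_nonneg hp
  have e1 : mz p f true ρ = uncov p f w ρ
      + WS (fun x => bitProd p x * cubeCov w x) (fun x => memCube ρ x ∧ f x = true) := by
    unfold uncov mz SM
    rw [← WS_add]
    exact WS_congr_wt _ fun x _ => by ring
  have e2 : WS (fun x => bitProd p x * cubeCov w x) (fun x => memCube ρ x ∧ f x = true)
      = ∑ B : Subcube n, w B * SB1 p f ρ B := by
    rw [← swap1 p w (fun x => memCube ρ x ∧ f x = true)]
    exact Finset.sum_congr rfl fun B _ => by
      rw [SB1, SM_congr p (P := fun x => memCube ρ x ∧ memCube B x ∧ f x = true)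
        (Q := fun x => (memCube ρ x ∧ f x = true) ∧ memCube B x) (fun x => by tauto)]
  have e3 : (∑ B : Subcube n, w B * SB1 p f ρ B)
      ≤ (∑ B : Subcube n, if (∀ i b, B i = some b → ρ i = some b)
          then w B * SB1 p f ρ B else 0) + ORPH p f w ρ 0 := by
    unfold ORPH
    rw [← Finset.sum_add_distrib]
    refine Finset.sum_le_sum fun B _ => ?_
    have hnn : 0 ≤ w B * SB1 p f ρ B := mul_nonneg (hw0 B) (SM_nonneg hp _)
    by_cases hC : ∀ i b, B i = some b → ρ i = some b
    · rw [if_pos hC]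
      have : (0:ℝ) ≤ if 0 + 1 ≤ gB B ρ then w B * SB1 p f ρ B else 0 := by
        split_ifs <;> simp [hnn]
      linarith
    · by_cases hg : 0 + 1 ≤ gB B ρ
      · rw [if_neg hC, if_pos hg]
        linarith
      · -- B is inconsistent with ρ, so SB1 = 0
        have hg0 : gB B ρ = 0 := by omega
        have hempty : ∀ i, ¬ ((B i).isSome ∧ ρ i = none) := by
          intro i hi
          have : i ∈ Finset.univ.filter fun i => (B i).isSome ∧ ρ i = none :=
            Finset.mem_filter.2 ⟨Finset.mem_univ i, hi⟩
          have hcard : 0 < gB B ρ := Finset.card_pos.2 ⟨i, this⟩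
          omega
        push_neg at hC
        obtain ⟨i, b, hib, hρi⟩ := hC
        have hsome : (B i).isSome := by rw [hib]; rfl
        have hρs : ρ i ≠ none := fun hc => hempty i ⟨hsome, hc⟩
        rcases hρ : ρ i with _ | b'
        · exact absurd hρ hρs
        have hbb : b' ≠ b := fun hc => hρi (by rw [hρ, hc])
        have hSB : SB1 p f ρ B = 0 := by
          unfold SB1 SM WS
          refine Finset.sum_eq_zero fun x _ => ?_
          have : ¬ (memCube ρ x ∧ memCube B x ∧ f x = true) := by
            rintro ⟨hxρ, hxB, -⟩
            exact hbb ((hxρ i b' hρ).symm.trans (hxB i b hib))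
          rw [if_neg this]
        rw [if_neg (fun hc => hρi (hc i b hib)), hSB, mul_zero]
        split_ifs <;> simp
  have e4 : (∑ B : Subcube n, if (∀ i b, B i = some b → ρ i = some b)
        then w B * SB1 p f ρ B else 0) ≤ β1 * mC p ρ := by
    have hmC : 0 ≤ mC p ρ := SM_nonneg hp _
    calc (∑ B : Subcube n, if (∀ i b, B i = some b → ρ i = some b)
          then w B * SB1 p f ρ B else 0)
        ≤ ∑ B : Subcube n, (if (∀ i b, B i = some b → ρ i = some b)
            then w B else 0) * mC p ρ := by
          refine Finset.sum_le_sum fun B _ => ?_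
          split_ifs with hC
          · exact mul_le_mul_of_nonneg_left (SM_mono hp fun x hx => hx.1) (hw0 B)
          · simp
      _ = Zf w ρ * mC p ρ := by rw [← Finset.sum_mul]; rfl
      _ ≤ β1 * mC p ρ := mul_le_mul_of_nonneg_right (not_lt.1 h2) hmC
  linarith

/-- children have the same residual support count -/
lemma gB_child {ρ : Subcube n} {l : List (Fin n)} {ρ' : Subcube n} (hρ' : ρ' ∈ Chl ρ l)
    (B : Subcube n) :
    gB B ρ' = (Finset.univ.filter fun i => (B i).isSome ∧ ρ i = none ∧ i ∉ l).card := by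
  rcases Finset.mem_image.1 hρ' with ⟨x0, _, hx0⟩
  subst hx0
  unfold gB
  congr 1
  apply Finset.filter_congr
  intro i _
  constructor
  · rintro ⟨hB, hnone⟩
    unfold OvL at hnone
    by_cases hil : i ∈ l
    · rw [if_pos hil] at hnone; cases hnone
    · rw [if_neg hil] at hnone; exact ⟨hB, hnone, hil⟩
  · rintro ⟨hB, hnone, hil⟩
    refine ⟨hB, ?_⟩
    unfold OvL
    rw [if_neg hil]
    exact hnone

/-- summing the orphan masses of the children -/
lemma orph_step (hp : ∀ i, 0 ≤ p i ∧ p i ≤ 1) (hw0 : ∀ A, 0 ≤ w A)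
    {ρ A : Subcube n} {l : List (Fin n)} (hl : ∀ i ∈ l, ρ i = none)
    (hmem : ∀ i, i ∈ l ↔ ((A i).isSome ∧ ρ i = none)) (k : ℕ) :
    (∑ ρ' ∈ Chl ρ l, ORPH p f w ρ' k)
      ≤ ORPH p f w ρ (k+1) + PM p f w ρ A := by
  have hsw : (∑ ρ' ∈ Chl ρ l, ORPH p f w ρ' k)
      = ∑ B : Subcube n, ∑ ρ' ∈ Chl ρ l,
          (if k + 1 ≤ gB B ρ' then w B * SB1 p f ρ' B else 0) := by
    unfold ORPH
    exact Finset.sum_comm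
  rw [hsw]
  have hB1 : ∀ B : Subcube n, (∑ ρ' ∈ Chl ρ l,
      (if k + 1 ≤ gB B ρ' then w B * SB1 p f ρ' B else 0))
      = (if k + 1 ≤ (Finset.univ.filter fun i => (B i).isSome ∧ ρ i = none ∧ i ∉ l).card
          then w B * SB1 p f ρ B else 0) := by
    intro B
    have hpart : (∑ ρ' ∈ Chl ρ l, SB1 p f ρ' B) = SB1 p f ρ B := by
      rw [SB1_as (p := p) (f := f) ρ B,
        partition hl (fun x => if memCube B x ∧ f x = true then bitProd p x else 0)]
      exact Finset.sum_congr rfl fun ρ' _ => SB1_as (p := p) (f := f) ρ' B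
    calc (∑ ρ' ∈ Chl ρ l, (if k + 1 ≤ gB B ρ' then w B * SB1 p f ρ' B else 0))
        = ∑ ρ' ∈ Chl ρ l,
            (if k + 1 ≤ (Finset.univ.filter fun i => (B i).isSome ∧ ρ i = none ∧ i ∉ l).card
              then w B * SB1 p f ρ' B else 0) := by
          refine Finset.sum_congr rfl fun ρ' hρ' => ?_
          rw [gB_child hρ' B]
      _ = (if k + 1 ≤ (Finset.univ.filter fun i => (B i).isSome ∧ ρ i = none ∧ i ∉ l).card
            then w B * SB1 p f ρ B else 0) := by
          split_ifs with hgp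
          · rw [← Finset.mul_sum, hpart]
          · exact Finset.sum_eq_zero fun ρ' _ => rfl
  rw [Finset.sum_congr rfl fun B _ => hB1 B]
  unfold ORPH PM
  rw [← Finset.sum_add_distrib]
  refine Finset.sum_le_sum fun B _ => ?_
  have hnn : 0 ≤ w B * SB1 p f ρ B := mul_nonneg (hw0 B) (SM_nonneg hp _)
  by_cases hgp : k + 1 ≤ (Finset.univ.filter fun i => (B i).isSome ∧ ρ i = none ∧ i ∉ l).card
  · rw [if_pos hgp]
    by_cases hesc : esc ρ A B
    · rw [if_pos hesc]
      have : (0:ℝ) ≤ if k + 1 + 1 ≤ gB B ρ then w B * SB1 p f ρ B else 0 := by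
        split_ifs <;> simp [hnn]
      linarith
    · -- non-escaping: a new coordinate of B is queried, so B is an orphan of ρ
      unfold esc at hesc
      push_neg at hesc
      obtain ⟨i, hρi, hAi, hBi⟩ := hesc
      have hil : i ∈ l := (hmem i).2 ⟨hAi, hρi⟩
      have hsub : (Finset.univ.filter fun i => (B i).isSome ∧ ρ i = none ∧ i ∉ l)
          ⊆ Finset.univ.filter fun i => (B i).isSome ∧ ρ i = none := by
        intro j hj
        rcases Finset.mem_filter.1 hj with ⟨hju, hj1, hj2, _⟩
        exact Finset.mem_filter.2 ⟨hju, hj1, hj2⟩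
      have hiin : i ∈ Finset.univ.filter fun i => (B i).isSome ∧ ρ i = none :=
        Finset.mem_filter.2 ⟨Finset.mem_univ i, hBi, hρi⟩
      have hinot : i ∉ Finset.univ.filter fun i => (B i).isSome ∧ ρ i = none ∧ i ∉ l := by
        intro hc
        exact (Finset.mem_filter.1 hc).2.2.2 hil
      have hsub2 : (Finset.univ.filter fun i => (B i).isSome ∧ ρ i = none ∧ i ∉ l)
          ⊆ (Finset.univ.filter fun i => (B i).isSome ∧ ρ i = none).erase i :=
        fun j hj => Finset.mem_erase.2 ⟨fun e => hinot (e ▸ hj), hsub hj⟩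
      have hcard := Finset.card_le_card hsub2
      have hcard2 := Finset.card_erase_of_mem hiin
      have hpos : 0 < (Finset.univ.filter fun i => (B i).isSome ∧ ρ i = none).card :=
        Finset.card_pos.2 ⟨i, hiin⟩
      have hg : k + 1 + 1 ≤ gB B ρ := by
        unfold gB
        omega
      rw [if_pos hg]
      have : (0:ℝ) ≤ if esc ρ A B then w B * SB1 p f ρ B else 0 := by
        split_ifs <;> simp [hnn]
      linarith
  · rw [if_neg hgp]
    have h1 : (0:ℝ) ≤ if k + 1 + 1 ≤ gB B ρ then w B * SB1 p f ρ B else 0 := by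
      split_ifs <;> simp [hnn]
    have h2 : (0:ℝ) ≤ if esc ρ A B then w B * SB1 p f ρ B else 0 := by
      split_ifs <;> simp [hnn]
    linarith

end Build

/-! ### the recursive construction -/

noncomputable def Asel (p : Fin n → ℝ) (f : (Fin n → Bool) → Bool) (u w : Subcube n → ℝ)
    (α0 β0 β1 : ℝ) (ρ : Subcube n) : Subcube n :=
  if h : ∃ A, u A ≠ 0 ∧ PM p f w ρ A ≤ cconst α0 β0 β1 * mC p ρ then h.choose
  else fun _ => none

noncomputable def lsel (p : Fin n → ℝ) (f : (Fin n → Bool) → Bool) (u w : Subcube n → ℝ)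
    (α0 β0 β1 : ℝ) (ρ : Subcube n) : List (Fin n) :=
  (Finset.univ.filter fun i => (Asel p f u w α0 β0 β1 ρ i).isSome ∧ ρ i = none).toList

lemma lsel_mem (p : Fin n → ℝ) (f : (Fin n → Bool) → Bool) (u w : Subcube n → ℝ)
    (α0 β0 β1 : ℝ) (ρ : Subcube n) (i : Fin n) :
    i ∈ lsel p f u w α0 β0 β1 ρ
      ↔ ((Asel p f u w α0 β0 β1 ρ i).isSome ∧ ρ i = none) := by
  unfold lsel
  rw [Finset.mem_toList, Finset.mem_filter]
  exact ⟨fun h => h.2, fun h => ⟨Finset.mem_univ i, h⟩⟩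

lemma lsel_none (p : Fin n → ℝ) (f : (Fin n → Bool) → Bool) (u w : Subcube n → ℝ)
    (α0 β0 β1 : ℝ) (ρ : Subcube n) : ∀ i ∈ lsel p f u w α0 β0 β1 ρ, ρ i = none :=
  fun i hi => ((lsel_mem p f u w α0 β0 β1 ρ i).1 hi).2

lemma lsel_length {a : ℕ} (p : Fin n → ℝ) (f : (Fin n → Bool) → Bool) (u w : Subcube n → ℝ)
    (α0 β0 β1 : ℝ) (hua : ∀ A, u A ≠ 0 → cubeSize A ≤ a) (ρ : Subcube n) :
    (lsel p f u w α0 β0 β1 ρ).length ≤ a := by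
  unfold lsel
  rw [Finset.length_toList]
  unfold Asel
  split_ifs with h
  · have hsub : (Finset.univ.filter fun i => (h.choose i).isSome ∧ ρ i = none)
        ⊆ Finset.univ.filter fun i => (h.choose i).isSome := by
      intro j hj
      rcases Finset.mem_filter.1 hj with ⟨hju, hj1, _⟩
      exact Finset.mem_filter.2 ⟨hju, hj1⟩
    calc (Finset.univ.filter fun i => (h.choose i).isSome ∧ ρ i = none).card
        ≤ (Finset.univ.filter fun i => (h.choose i).isSome).card := Finset.card_le_card hsub
      _ = cubeSize h.choose := rfl
      _ ≤ a := hua _ h.choose_spec.1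
  · simp

noncomputable def build (p : Fin n → ℝ) (f : (Fin n → Bool) → Bool) (u w : Subcube n → ℝ)
    (α0 β0 β1 : ℝ) : ℕ → Subcube n → DTree n
  | 0, ρ => if β1 < Zf w ρ then DTree.leaf true
      else if 4 * mz p f false ρ ≤ mC p ρ then DTree.leaf true else DTree.leaf false
  | (k+1), ρ => if β1 < Zf w ρ then DTree.leaf true
      else if 4 * mz p f false ρ ≤ mC p ρ then DTree.leaf true
      else queryList (lsel p f u w α0 β0 β1 ρ) ρ (build p f u w α0 β0 β1 k)

lemma build_depth {a : ℕ} (p : Fin n → ℝ) (f : (Fin n → Bool) → Bool) (u w : Subcube n → ℝ)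
    (α0 β0 β1 : ℝ) (hua : ∀ A, u A ≠ 0 → cubeSize A ≤ a) :
    ∀ (k : ℕ) (ρ : Subcube n), (build p f u w α0 β0 β1 k ρ).depth ≤ k * a := by
  intro k
  induction k with
  | zero =>
      intro ρ
      rw [build]
      split_ifs <;> simp [DTree.depth]
  | succ k ih =>
      intro ρ
      rw [build]
      split_ifs
      · simp [DTree.depth]
      · simp [DTree.depth]
      · have hd := queryList_depth (build p f u w α0 β0 β1 k) (k * a) ih
          (lsel p f u w α0 β0 β1 ρ) ρ
        have hlen := lsel_length p f u w α0 β0 β1 hua ρ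
        calc (queryList (lsel p f u w α0 β0 β1 ρ) ρ (build p f u w α0 β0 β1 k)).depth
            ≤ (lsel p f u w α0 β0 β1 ρ).length + k * a := hd
          _ ≤ a + k * a := by omega
          _ = (k+1) * a := by ring

/-- error decomposition over children -/
lemma Errm_query (p : Fin n → ℝ) (f : (Fin n → Bool) → Bool)
    {ρ : Subcube n} {l : List (Fin n)} (hl : ∀ i ∈ l, ρ i = none)
    (c : Subcube n → DTree n) :
    Errm p f ρ (queryList l ρ c) = ∑ ρ' ∈ Chl ρ l, Errm p f ρ' (c ρ') := by
  have e1 : Errm p f ρ (queryList l ρ c)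
      = WS (fun x => if (c (OvL l ρ x)).eval x ≠ f x then bitProd p x else 0)
          (fun x => memCube ρ x) := by
    unfold Errm WS
    refine Finset.sum_congr rfl fun x _ => ?_
    have he := queryList_eval c x l ρ
    by_cases h1 : memCube ρ x <;> by_cases h2 : (c (OvL l ρ x)).eval x = f x <;>
      simp [h1, h2, he]
  rw [e1, partition hl (fun x => if (c (OvL l ρ x)).eval x ≠ f x then bitProd p x else 0)]
  refine Finset.sum_congr rfl fun ρ' hρ' => ?_
  unfold Errm WS
  refine Finset.sum_congr rfl fun x _ => ?_
  by_cases h1 : memCube ρ' x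
  · rcases Finset.mem_image.1 hρ' with ⟨x0, _, hx0⟩
    have hov : OvL l ρ x = ρ' := by
      subst hx0
      exact OvL_unique h1
    by_cases h2 : (c ρ').eval x = f x <;> simp [h1, h2, hov]
  · simp [h1]

/-- the main inductive error bound -/
lemma main_claim (p : Fin n → ℝ) (f : (Fin n → Bool) → Bool) (u w : Subcube n → ℝ)
    (α0 β0 β1 : ℝ)
    (hp : ∀ i, 0 ≤ p i ∧ p i ≤ 1) (hα0' : α0 < 1) (hβ0 : 0 ≤ β0) (hβ1 : 0 ≤ β1)
    (hu0 : ∀ A, 0 ≤ u A) (hw0 : ∀ A, 0 ≤ w A)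
    (hcov0 : ∀ x, f x = false → 1 - α0 ≤ cubeCov u x)
    (hpack0 : ∀ x, f x = true → cubeCov u x ≤ β0)
    (hone1 : ∀ x, cubeCov w x ≤ 1)
    (hpack1 : ∀ x, f x = false → cubeCov w x ≤ β1) :
    ∀ (k : ℕ) (ρ : Subcube n),
      Errm p f ρ (build p f u w α0 β0 β1 k ρ)
        ≤ mC p ρ / 4 + uncov p f w ρ + β1 * mC p ρ
          + (k : ℝ) * cconst α0 β0 β1 * mC p ρ + ORPH p f w ρ k := by
  have hμ : ∀ x, 0 ≤ bitProd p x := bitProd_nonneg hp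
  have hcc : (0:ℝ) ≤ cconst α0 β0 β1 := by
    unfold cconst
    have : (0:ℝ) ≤ 4 * β0 / (1 - α0) := div_nonneg (by linarith) (by linarith)
    linarith
  have hmC : ∀ ρ : Subcube n, 0 ≤ mC p ρ := fun ρ => SM_nonneg hp _
  have huncov : ∀ ρ : Subcube n, 0 ≤ uncov p f w ρ := fun ρ =>
    WS_nonneg (fun x => mul_nonneg (hμ x) (by linarith [hone1 x])) _
  have hORPH : ∀ (ρ : Subcube n) (k : ℕ), 0 ≤ ORPH p f w ρ k := fun ρ k =>
    Finset.sum_nonneg fun B _ => by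
      split_ifs
      · exact mul_nonneg (hw0 B) (SM_nonneg hp _)
      · exact le_refl 0
  have hmz0 : ∀ ρ : Subcube n, 0 ≤ mz p f false ρ := fun ρ => SM_nonneg hp _
  intro k
  induction k with
  | zero =>
      intro ρ
      rw [build]
      split_ifs with h2 h3
      · rw [Errm_leaf_true, mz_false_zero hp hw0 hpack1 h2]
        have b1 := hORPH ρ 0
        have b2 := huncov ρ
        have b3 := hmC ρ
        have b4 : 0 ≤ β1 * mC p ρ := mul_nonneg hβ1 (hmC ρ)
        push_cast
        linarith
      · rw [Errm_leaf_true]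
        have b1 := hORPH ρ 0
        have b2 := huncov ρ
        have b4 : 0 ≤ β1 * mC p ρ := mul_nonneg hβ1 (hmC ρ)
        push_cast
        linarith
      · rw [Errm_leaf_false]
        have b0 := base_bound (f := f) (w := w) hp hβ1 hw0 h2
        have b3 := hmC ρ
        push_cast
        linarith
  | succ k ih =>
      intro ρ
      rw [build]
      split_ifs with h2 h3
      · rw [Errm_leaf_true, mz_false_zero hp hw0 hpack1 h2]
        have b1 := hORPH ρ (k+1)
        have b2 := huncov ρ
        have b3 := hmC ρ
        have b4 : 0 ≤ β1 * mC p ρ := mul_nonneg hβ1 (hmC ρ)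
        have b5 : 0 ≤ ((k:ℝ)+1) * cconst α0 β0 β1 * mC p ρ :=
          mul_nonneg (mul_nonneg (by positivity) hcc) (hmC ρ)
        push_cast
        linarith
      · rw [Errm_leaf_true]
        have b1 := hORPH ρ (k+1)
        have b2 := huncov ρ
        have b4 : 0 ≤ β1 * mC p ρ := mul_nonneg hβ1 (hmC ρ)
        have b5 : 0 ≤ ((k:ℝ)+1) * cconst α0 β0 β1 * mC p ρ :=
          mul_nonneg (mul_nonneg (by positivity) hcc) (hmC ρ)
        push_cast
        linarith
      · -- the querying step
        have hex := exist_good hp hα0' hβ0 hβ1 hu0 hw0 hcov0 hpack0 hone1 hpack1 ρ h3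
        have hAspec : u (Asel p f u w α0 β0 β1 ρ) ≠ 0
            ∧ PM p f w ρ (Asel p f u w α0 β0 β1 ρ)
              ≤ cconst α0 β0 β1 * mC p ρ := by
          unfold Asel
          rw [dif_pos hex]
          exact hex.choose_spec
        have hl : ∀ i ∈ lsel p f u w α0 β0 β1 ρ, ρ i = none :=
          lsel_none p f u w α0 β0 β1 ρ
        have hmem : ∀ i, i ∈ lsel p f u w α0 β0 β1 ρ
            ↔ ((Asel p f u w α0 β0 β1 ρ i).isSome ∧ ρ i = none) :=
          fun i => lsel_mem p f u w α0 β0 β1 ρ i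
        rw [Errm_query p f hl (build p f u w α0 β0 β1 k)]
        have hmCsum : mC p ρ = ∑ ρ' ∈ Chl ρ (lsel p f u w α0 β0 β1 ρ), mC p ρ' := by
          unfold mC SM
          exact partition hl (bitProd p)
        have huncovsum : uncov p f w ρ
            = ∑ ρ' ∈ Chl ρ (lsel p f u w α0 β0 β1 ρ), uncov p f w ρ' := by
          rw [uncov_as,
            partition hl (fun x => if f x = true then bitProd p x * (1 - cubeCov w x) else 0)]
          exact Finset.sum_congr rfl fun ρ' _ => (uncov_as (p := p) (f := f) (w := w) ρ').symm
        have horph := orph_step (p := p) (f := f) hp hw0 hl hmem k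
        calc (∑ ρ' ∈ Chl ρ (lsel p f u w α0 β0 β1 ρ), Errm p f ρ' (build p f u w α0 β0 β1 k ρ'))
            ≤ ∑ ρ' ∈ Chl ρ (lsel p f u w α0 β0 β1 ρ), (mC p ρ' / 4 + uncov p f w ρ'
                + β1 * mC p ρ' + (k : ℝ) * cconst α0 β0 β1 * mC p ρ' + ORPH p f w ρ' k) :=
              Finset.sum_le_sum fun ρ' _ => ih ρ'
          _ = (∑ ρ' ∈ Chl ρ (lsel p f u w α0 β0 β1 ρ), mC p ρ') / 4
              + (∑ ρ' ∈ Chl ρ (lsel p f u w α0 β0 β1 ρ), uncov p f w ρ')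
              + β1 * (∑ ρ' ∈ Chl ρ (lsel p f u w α0 β0 β1 ρ), mC p ρ')
              + (k : ℝ) * cconst α0 β0 β1 * (∑ ρ' ∈ Chl ρ (lsel p f u w α0 β0 β1 ρ), mC p ρ')
              + (∑ ρ' ∈ Chl ρ (lsel p f u w α0 β0 β1 ρ), ORPH p f w ρ' k) := by
              rw [Finset.sum_add_distrib, Finset.sum_add_distrib, Finset.sum_add_distrib,
                Finset.sum_add_distrib, Finset.sum_div, Finset.mul_sum, Finset.mul_sum]
          _ ≤ mC p ρ / 4 + uncov p f w ρ + β1 * mC p ρ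
              + (k : ℝ) * cconst α0 β0 β1 * mC p ρ
              + (ORPH p f w ρ (k+1) + cconst α0 β0 β1 * mC p ρ) := by
              rw [← hmCsum, ← huncovsum]
              have := le_trans horph (by linarith [hAspec.2] :
                ORPH p f w ρ (k+1) + PM p f w ρ (Asel p f u w α0 β0 β1 ρ)
                  ≤ ORPH p f w ρ (k+1) + cconst α0 β0 β1 * mC p ρ)
              linarith
          _ = mC p ρ / 4 + uncov p f w ρ + β1 * mC p ρ
              + ((k:ℕ)+1 : ℝ) * cconst α0 β0 β1 * mC p ρ + ORPH p f w ρ (k+1) := by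
              push_cast
              ring
          _ ≤ mC p ρ / 4 + uncov p f w ρ + β1 * mC p ρ
              + (((k+1 : ℕ)) : ℝ) * cconst α0 β0 β1 * mC p ρ + ORPH p f w ρ (k+1) := by
              push_cast
              linarith

lemma fac_none (r : ℝ) : fac r (fun v => cOk none v) = 1 := by
  simp [fac, cOk]

lemma mC_bot (p : Fin n → ℝ) : mC p (fun _ => none : Subcube n) = 1 := by
  unfold mC
  rw [SM_fact1]
  exact (Finset.prod_congr rfl fun i _ => fac_none (p i)).trans Finset.prod_const_one

end L34

end

/-- **Lemma 3.4.** If the bit-wise product distribution `μ = bitProd p` is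
`(α₀,β₀,α₁,β₁,a,b)`-feasible for `f` (witnessed by `u`, `w`) and `δ > 0`, `α₀ < 1`, then
there is a decision tree for `f` of depth at most `a·b` erring with probability at most
`1/4 + α₁ + β₁ + 4b(β₁+δ) + β₀/((1-α₀)δ)` under `μ`. -/
theorem feasible_implies_dtree {n : ℕ} (δ : ℝ) (hδ : 0 < δ)
    (f : (Fin n → Bool) → Bool) (p : Fin n → ℝ) (hp : ∀ i, 0 ≤ p i ∧ p i ≤ 1)
    (α0 β0 α1 β1 : ℝ) (hα0 : 0 ≤ α0) (hα0' : α0 < 1)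
    (hβ0 : 0 ≤ β0) (hα1 : 0 ≤ α1) (hβ1 : 0 ≤ β1)
    (a b : ℕ)
    (u w : Subcube n → ℝ) (hu0 : ∀ A, 0 ≤ u A) (hw0 : ∀ A, 0 ≤ w A)
    (hua : ∀ A, u A ≠ 0 → cubeSize A ≤ a)
    (hwb : ∀ A, w A ≠ 0 → cubeSize A ≤ b)
    (hufix : ∀ A, u A ≠ 0 → ∀ i, p i = 0 ∨ p i = 1 → A i = none)
    (hwfix : ∀ A, w A ≠ 0 → ∀ i, p i = 0 ∨ p i = 1 → A i = none)
    (hcov0 : ∀ x, f x = false → 1 - α0 ≤ cubeCov u x)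
    (hpack0 : ∀ x, f x = true → cubeCov u x ≤ β0)
    (hcov1 : (1 - α1) * qTotalZ (bitProd p) f true ≤
      ∑ A : Subcube n, cubeMassZ (bitProd p) f true A * w A)
    (hone1 : ∀ x, cubeCov w x ≤ 1)
    (hpack1 : ∀ x, f x = false → cubeCov w x ≤ β1) :
    ∃ T : DTree n, T.depth ≤ a * b ∧
      qErr (bitProd p) f T ≤
        1 / 4 + α1 + β1 + 4 * (b : ℝ) * (β1 + δ) + β0 / ((1 - α0) * δ) := by
  classical
  have hmu : ∀ x, 0 ≤ bitProd p x := L34.bitProd_nonneg hp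
  have hb0 : (0:ℝ) ≤ (b:ℝ) := Nat.cast_nonneg b
  have hXnn : (0:ℝ) ≤ β0 / ((1 - α0) * δ) :=
    div_nonneg hβ0 (mul_nonneg (by linarith) hδ.le)
  have hmzle : L34.mz p f true (fun _ => none : Subcube n) ≤ 1 := by
    have h := L34.SM_mono (p := p) hp
      (P := fun x => memCube (fun _ => none : Subcube n) x ∧ f x = true)
      (Q := fun x => memCube (fun _ => none : Subcube n) x) (fun x h => h.1)
    have h2 := L34.mC_bot p
    unfold L34.mC at h2
    unfold L34.mz
    linarith
  by_cases htriv : 4 * (b:ℝ) * δ < 1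
  · -- main case: run the recursive construction
    refine ⟨L34.build p f u w α0 β0 β1 b (fun _ => none), ?_, ?_⟩
    · have := L34.build_depth p f u w α0 β0 β1 hua b (fun _ => none)
      calc (L34.build p f u w α0 β0 β1 b (fun _ => none)).depth ≤ b * a := this
        _ = a * b := Nat.mul_comm b a
    · have hq : qErr (bitProd p) f (L34.build p f u w α0 β0 β1 b (fun _ => none))
          = L34.Errm p f (fun _ => none) (L34.build p f u w α0 β0 β1 b (fun _ => none)) := by
        unfold qErr L34.Errm L34.WS
        refine Finset.sum_congr rfl fun x _ => ?_
        have hbot := L34.memCube_bot (n := n) x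
        by_cases h2 : (L34.build p f u w α0 β0 β1 b (fun _ => none)).eval x = f x <;>
          simp [hbot, h2]
      have hmain := L34.main_claim p f u w α0 β0 β1 hp hα0' hβ0 hβ1 hu0 hw0 hcov0 hpack0
        hone1 hpack1 b (fun _ => none)
      have hmc := L34.mC_bot p
      rw [hmc] at hmain
      -- orphans vanish at the root
      have horph : L34.ORPH p f w (fun _ => none : Subcube n) b = 0 := by
        unfold L34.ORPH
        refine Finset.sum_eq_zero fun B _ => ?_
        split_ifs with hg
        · have hgb : L34.gB B (fun _ => none : Subcube n) = cubeSize B := by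
            unfold L34.gB cubeSize
            congr 1
            apply Finset.filter_congr
            intro i _
            simp
          rw [hgb] at hg
          have hwB : w B = 0 := by
            by_contra hne
            have := hwb B hne
            omega
          rw [hwB, zero_mul]
        · rfl
      rw [horph] at hmain
      -- the uncovered mass at the root is at most α1
      have huncb : L34.uncov p f w (fun _ => none : Subcube n) ≤ α1 := by
        have e0 : L34.uncov p f w (fun _ => none : Subcube n)
            = L34.WS (fun x => bitProd p x * (1 - cubeCov w x)) (fun x => f x = true) := by
          unfold L34.uncov
          exact L34.WS_congr _ fun x => by simp [L34.memCube_bot (n := n) x]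
        have e1 : L34.WS (fun x => bitProd p x * (1 - cubeCov w x)) (fun x => f x = true)
            + L34.WS (fun x => bitProd p x * cubeCov w x) (fun x => f x = true)
            = L34.WS (bitProd p) (fun x => f x = true) := by
          rw [← L34.WS_add]
          exact L34.WS_congr_wt _ fun x _ => by ring
        have e2 : L34.WS (bitProd p) (fun x => f x = true) = qTotalZ (bitProd p) f true := by
          unfold qTotalZ L34.WS
          refine Finset.sum_congr rfl fun x _ => ?_
          by_cases h : f x = true <;> simp [h]
        have e3 : (∑ A : Subcube n, cubeMassZ (bitProd p) f true A * w A)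
            = L34.WS (fun x => bitProd p x * cubeCov w x) (fun x => f x = true) := by
          rw [← L34.swap1 p w (fun x => f x = true)]
          refine Finset.sum_congr rfl fun B _ => ?_
          have hcm : cubeMassZ (bitProd p) f true B
              = L34.SM p (fun x => f x = true ∧ memCube B x) := by
            unfold cubeMassZ L34.SM L34.WS
            refine Finset.sum_congr rfl fun x _ => ?_
            by_cases h1 : memCube B x <;> by_cases hfx : f x = true <;> simp [h1, hfx]
          rw [hcm]
          ring
        have hq1 : qTotalZ (bitProd p) f true ≤ 1 := by
          rw [← e2]
          have h := L34.WS_mono_pred (h := bitProd p) hmu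
            (P := fun x => f x = true)
            (Q := fun x => memCube (fun _ => none : Subcube n) x)
            (fun x _ => L34.memCube_bot (n := n) x)
          have h2 := L34.mC_bot p
          unfold L34.mC L34.SM at h2
          linarith
        have hq0 : 0 ≤ qTotalZ (bitProd p) f true := by
          rw [← e2]
          exact L34.WS_nonneg hmu _
        rw [e3] at hcov1
        rw [e0]
        nlinarith [hcov1, e1, e2]
      -- combine the cost terms
      have hbc : (b:ℝ) * L34.cconst α0 β0 β1 * 1
          ≤ 4 * (b:ℝ) * (β1 + δ) + β0 / ((1 - α0) * δ) := by
        have hne1 : (1:ℝ) - α0 ≠ 0 := by linarith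
        have hne2 : δ ≠ 0 := ne_of_gt hδ
        have heq : 4 * (b:ℝ) * β0 / (1 - α0) = (4 * (b:ℝ) * δ) * (β0 / ((1 - α0) * δ)) := by
          field_simp
        have h2 : (4 * (b:ℝ) * δ) * (β0 / ((1 - α0) * δ)) ≤ 1 * (β0 / ((1 - α0) * δ)) :=
          mul_le_mul_of_nonneg_right (le_of_lt htriv) hXnn
        have hexp : (b:ℝ) * L34.cconst α0 β0 β1 * 1
            = (b:ℝ) * β1 + 4 * (b:ℝ) * β0 / (1 - α0) := by
          unfold L34.cconst
          ring
        have h3 : (b:ℝ) * β1 ≤ 4 * (b:ℝ) * β1 := by nlinarith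
        have h4 : (0:ℝ) ≤ 4 * (b:ℝ) * δ := by nlinarith [hδ.le]
        have h6 : 4 * (b:ℝ) * (β1 + δ) = 4 * (b:ℝ) * β1 + 4 * (b:ℝ) * δ := by ring
        rw [hexp, heq]
        linarith
      rw [hq]
      calc L34.Errm p f (fun _ => none) (L34.build p f u w α0 β0 β1 b (fun _ => none))
          ≤ 1 / 4 + L34.uncov p f w (fun _ => none) + β1 * 1
            + (b:ℝ) * L34.cconst α0 β0 β1 * 1 + 0 := by linarith [hmain]
        _ ≤ 1 / 4 + α1 + β1 + 4 * (b : ℝ) * (β1 + δ) + β0 / ((1 - α0) * δ) := by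
            linarith [huncb, hbc]
  · -- trivial case: a constant tree suffices
    refine ⟨DTree.leaf false, by simp [DTree.depth], ?_⟩
    have h1 : qErr (bitProd p) f (DTree.leaf false) = L34.mz p f true (fun _ => none) := by
      unfold qErr L34.mz L34.SM L34.WS
      refine Finset.sum_congr rfl fun x _ => ?_
      have hbot := L34.memCube_bot (n := n) x
      cases hf : f x <;> simp [DTree.eval, hf, hbot]
    have h4 : 4 * (b:ℝ) * (β1 + δ) ≥ 4 * (b:ℝ) * δ := by nlinarith
    have h5 : (1:ℝ) ≤ 4 * (b:ℝ) * δ := not_lt.1 htriv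
    rw [h1]
    linarith
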